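/- Consider the Pinchuk polynomials t, h, f on ℂ². The curve f⁻¹(0) ⊆ ℂ² is the union of the two sets A₁ = (f,h)⁻¹(0, 0) and A₂ = (f,h)⁻¹(0, −1); the restriction of the polynomial function t to Aᵢ is injective with image t(Aᵢ) = ℂ \ {0} for i = 1, 2. Explicitly, A₁ = {(−1/s, −s(s+1)) : s ∈ ℂ \ {0}} and A₂ = {(−(s+1)/s², −s²) : s ∈ ℂ \ {0}}, where s is the value of t. -/

import Mathlib

noncomputable section

/-- The complex Pinchuk auxiliary polynomial `t = xy - 1`. -/
def cT (x y : ℂ) : ℂ := x * y - 1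

/-- The complex Pinchuk auxiliary polynomial `h = t(xt + 1)`. -/
def cH (x y : ℂ) : ℂ := cT x y * (x * cT x y + 1)

/-- The complex Pinchuk auxiliary polynomial `f = (xt+1)^2 (t^2 + y)`. -/
def cF (x y : ℂ) : ℂ := (x * cT x y + 1) ^ 2 * ((cT x y) ^ 2 + y)

/-- The complex Pinchuk polynomial `u(f,h)`. -/
def cU (f h : ℂ) : ℂ :=
  (1/4) * f * (75*f^3 + 300*f^2*h + 450*f*h^2 + 276*f^2 + 828*f*h + 48*h^2 + 364*f + 48*h)

/-- The complexification `ℂF : ℂ² → ℂ²` of Pinchuk's map, given by the same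
    polynomials `p = f + h` and `q = -t² - 6th(h+1) + u(f,h)`. -/
def cPinchuk : ℂ × ℂ → ℂ × ℂ := fun v =>
  (cF v.1 v.2 + cH v.1 v.2,
   -(cT v.1 v.2)^2 - 6 * cT v.1 v.2 * cH v.1 v.2 * (cH v.1 v.2 + 1)
     + cU (cF v.1 v.2) (cH v.1 v.2))

/-- A continuous map `g : X → Y` is *not proper at* `y ∈ Y` if there is no
    neighborhood `U` of `y` such that `g ⁻¹(cl U)` is compact. -/
def NotProperAt {X Y : Type*} [TopologicalSpace X] [TopologicalSpace Y]
    (g : X → Y) (y : Y) : Prop :=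
  ¬ ∃ U ∈ nhds y, IsCompact (g ⁻¹' closure U)

/-- `A₁ = (f, h)⁻¹(0, 0)`. -/
def setA1 : Set (ℂ × ℂ) := {v | cF v.1 v.2 = 0 ∧ cH v.1 v.2 = 0}

/-- `A₂ = (f, h)⁻¹(0, -1)`. -/
def setA2 : Set (ℂ × ℂ) := {v | cF v.1 v.2 = 0 ∧ cH v.1 v.2 = -1}

/-- The curve `f⁻¹(0) ⊆ ℂ²` is the union of `A₁ = (f,h)⁻¹(0,0)` and
    `A₂ = (f,h)⁻¹(0,-1)`; the restriction of `t` to each `Aᵢ` is injective with image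
    `ℂ \ {0}`, and `A₁`, `A₂` are explicitly parameterized by the value `s` of `t`. -/

lemma hOfP1 (x y : ℂ) (h : x * cT x y + 1 = 0) : cH x y = 0 := by
  simp only [cH, cT] at *; linear_combination (x*y-1) * h

lemma hOfP2 (x y : ℂ) (h : (cT x y)^2 + y = 0) : cH x y = -1 := by
  simp only [cH, cT] at *; linear_combination x * h

lemma fsplit (x y : ℂ) : cF x y = 0 ↔ (x * cT x y + 1 = 0 ∨ (cT x y)^2 + y = 0) := by
  rw [cF, mul_eq_zero, pow_eq_zero_iff (two_ne_zero)]

lemma lemP1 (x y : ℂ) :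
    x * cT x y + 1 = 0 ↔ ∃ s : ℂ, s ≠ 0 ∧ x = -1/s ∧ y = -s*(s+1) ∧ cT x y = s := by
  simp only [cT]
  constructor
  · intro h
    have hs0 : x*y - 1 ≠ 0 := by
      intro h0; apply one_ne_zero (α := ℂ); linear_combination h - x*h0
    refine ⟨x*y-1, hs0, ?_, ?_, rfl⟩
    · field_simp; linear_combination h
    · linear_combination y * h
  · rintro ⟨s, hs, rfl, rfl, -⟩
    field_simp; ring

lemma lemP2 (x y : ℂ) :
    (cT x y)^2 + y = 0 ↔ ∃ s : ℂ, s ≠ 0 ∧ x = -(s+1)/s^2 ∧ y = -s^2 ∧ cT x y = s := by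
  simp only [cT]
  constructor
  · intro h
    have hs0 : x*y - 1 ≠ 0 := by
      intro h0
      have hy : y = 0 := by linear_combination h - (x*y-1)*h0
      rw [hy] at h0; norm_num at h0
    refine ⟨x*y-1, hs0, ?_, ?_, rfl⟩
    · field_simp; linear_combination x * h
    · linear_combination h
  · rintro ⟨s, hs, rfl, rfl, -⟩
    field_simp; ring

lemma A1iff (x y : ℂ) : (x, y) ∈ setA1 ↔ x * cT x y + 1 = 0 := by
  simp only [setA1, Set.mem_setOf_eq]
  constructor
  · rintro ⟨hf, hh⟩
    rcases (fsplit x y).1 hf with h | h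
    · exact h
    · have := hOfP2 x y h
      rw [hh] at this; norm_num at this
  · intro h
    exact ⟨(fsplit x y).2 (Or.inl h), hOfP1 x y h⟩

lemma A2iff (x y : ℂ) : (x, y) ∈ setA2 ↔ (cT x y)^2 + y = 0 := by
  simp only [setA2, Set.mem_setOf_eq]
  constructor
  · rintro ⟨hf, hh⟩
    rcases (fsplit x y).1 hf with h | h
    · have := hOfP1 x y h
      rw [hh] at this; norm_num at this
    · exact h
  · intro h
    exact ⟨(fsplit x y).2 (Or.inr h), hOfP2 x y h⟩

lemma tval1 (s : ℂ) (hs : s ≠ 0) : cT (-1/s) (-s*(s+1)) = s := by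
  simp only [cT]; field_simp; ring

lemma tval2 (s : ℂ) (hs : s ≠ 0) : cT (-(s+1)/s^2) (-s^2) = s := by
  simp only [cT]; field_simp; ring

theorem pinchuk_f_zero_set_description :
    {v : ℂ × ℂ | cF v.1 v.2 = 0} = setA1 ∪ setA2 ∧
    Set.InjOn (fun v : ℂ × ℂ => cT v.1 v.2) setA1 ∧
    (fun v : ℂ × ℂ => cT v.1 v.2) '' setA1 = {0}ᶜ ∧
    Set.InjOn (fun v : ℂ × ℂ => cT v.1 v.2) setA2 ∧
    (fun v : ℂ × ℂ => cT v.1 v.2) '' setA2 = {0}ᶜ ∧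
    setA1 = {w : ℂ × ℂ | ∃ s : ℂ, s ≠ 0 ∧ w = (-1/s, -s*(s+1)) ∧ cT w.1 w.2 = s} ∧
    setA2 = {w : ℂ × ℂ | ∃ s : ℂ, s ≠ 0 ∧ w = (-(s+1)/s^2, -s^2) ∧ cT w.1 w.2 = s} := by
  
  have h6 : setA1 = {w : ℂ × ℂ | ∃ s : ℂ, s ≠ 0 ∧ w = (-1/s, -s*(s+1)) ∧ cT w.1 w.2 = s} := by
    ext ⟨x, y⟩
    rw [A1iff x y, lemP1 x y]
    simp only [Set.mem_setOf_eq, Prod.mk.injEq]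
    constructor
    · rintro ⟨s, hs, hx, hy, ht⟩; exact ⟨s, hs, ⟨hx, hy⟩, ht⟩
    · rintro ⟨s, hs, ⟨hx, hy⟩, ht⟩; exact ⟨s, hs, hx, hy, ht⟩
  have h7 : setA2 = {w : ℂ × ℂ | ∃ s : ℂ, s ≠ 0 ∧ w = (-(s+1)/s^2, -s^2) ∧ cT w.1 w.2 = s} := by
    ext ⟨x, y⟩
    rw [A2iff x y, lemP2 x y]
    simp only [Set.mem_setOf_eq, Prod.mk.injEq]
    constructor
    · rintro ⟨s, hs, hx, hy, ht⟩; exact ⟨s, hs, ⟨hx, hy⟩, ht⟩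
    · rintro ⟨s, hs, ⟨hx, hy⟩, ht⟩; exact ⟨s, hs, hx, hy, ht⟩
  refine ⟨?_, ?_, ?_, ?_, ?_, h6, h7⟩
  · ext ⟨x, y⟩
    show cF x y = 0 ↔ _
    rw [Set.mem_union, A1iff x y, A2iff x y]
    exact fsplit x y
  · intro v hv w hw h
    rw [h6] at hv hw
    obtain ⟨s, hs, hv1, hv2⟩ := hv
    obtain ⟨r, hr, hw1, hw2⟩ := hw
    have hsr : s = r := by rw [← hv2, ← hw2]; exact h
    rw [hv1, hw1, hsr]
  · ext s
    simp only [Set.mem_image, Set.mem_compl_iff, Set.mem_singleton_iff]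
    constructor
    · rintro ⟨v, hv, rfl⟩
      rw [h6] at hv
      obtain ⟨r, hr, -, ht⟩ := hv
      show cT v.1 v.2 ≠ 0
      rw [ht]; exact hr
    · intro hs
      exact ⟨(-1/s, -s*(s+1)), by rw [h6]; exact ⟨s, hs, rfl, tval1 s hs⟩, tval1 s hs⟩
  · intro v hv w hw h
    rw [h7] at hv hw
    obtain ⟨s, hs, hv1, hv2⟩ := hv
    obtain ⟨r, hr, hw1, hw2⟩ := hw
    have hsr : s = r := by rw [← hv2, ← hw2]; exact h
    rw [hv1, hw1, hsr]
  · ext s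
    simp only [Set.mem_image, Set.mem_compl_iff, Set.mem_singleton_iff]
    constructor
    · rintro ⟨v, hv, rfl⟩
      rw [h7] at hv
      obtain ⟨r, hr, -, ht⟩ := hv
      show cT v.1 v.2 ≠ 0
      rw [ht]; exact hr
    · intro hs
      exact ⟨(-(s+1)/s^2, -s^2), by rw [h7]; exact ⟨s, hs, rfl, tval2 s hs⟩, tval2 s hs⟩
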